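/- Every automorphism σ of the graph Γ* fixes Γ pointwise: σ (inl v) = inl v for every vertex v of Γ. -/

import Mathlib

def HasExtProp {α : Type*} (G : SimpleGraph α) : Prop :=
  ∀ A B : Finset α, Disjoint A B →
    ∃ v, v ∉ A ∧ v ∉ B ∧ (∀ a ∈ A, G.Adj v a) ∧ ∀ b ∈ B, ¬ G.Adj v b

/-- The graph `Γ*`: to the graph `Γ` with enumeration `g` we attach, for each `n`,
an `n`-element clique `K_n` all of whose vertices are joined to `g n`. -/
def GammaStar {V : Type*} (Γ : SimpleGraph V) (g : ℕ → V) :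
    SimpleGraph (V ⊕ (Σ n : ℕ, Fin n)) where
  Adj x y :=
    match x, y with
    | Sum.inl u, Sum.inl v => Γ.Adj u v
    | Sum.inr p, Sum.inr q => p.1 = q.1 ∧ p ≠ q
    | Sum.inl v, Sum.inr p => v = g p.1
    | Sum.inr p, Sum.inl v => v = g p.1
  symm := by
    constructor
    rintro (u | p) (v | q) h
    · exact Γ.adj_symm h
    · exact h
    · exact h
    · exact ⟨h.1.symm, h.2.symm⟩
  loopless := by
    constructor
    rintro (u | p) h
    · exact Γ.irrefl h
    · exact h.2 rfl

section Aux
variable {V : Type*} (Γ : SimpleGraph V) (g : ℕ → V)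

lemma gs_adj_inl_inl (u v : V) :
    (GammaStar Γ g).Adj (Sum.inl u) (Sum.inl v) ↔ Γ.Adj u v := Iff.rfl

lemma gs_adj_inl_inr (v : V) (p : Σ n : ℕ, Fin n) :
    (GammaStar Γ g).Adj (Sum.inl v) (Sum.inr p) ↔ v = g p.1 := Iff.rfl

lemma gs_adj_inr_inl (v : V) (p : Σ n : ℕ, Fin n) :
    (GammaStar Γ g).Adj (Sum.inr p) (Sum.inl v) ↔ v = g p.1 := Iff.rfl

lemma gs_adj_inr_inr (p q : Σ n : ℕ, Fin n) :
    (GammaStar Γ g).Adj (Sum.inr p) (Sum.inr q) ↔ p.1 = q.1 ∧ p ≠ q := Iff.rfl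

lemma gs_neighbor_inl_infinite (hΓ : HasExtProp Γ) (v : V) :
    ((GammaStar Γ g).neighborSet (Sum.inl v)).Infinite := by
  classical
  have h1 : (Γ.neighborSet v).Infinite := by
    intro hfin
    obtain ⟨w, hwA, hwB, hA, hB⟩ := hΓ {v} hfin.toFinset (by
      simp [Finset.disjoint_singleton_left, Set.Finite.mem_toFinset])
    have : w ∈ hfin.toFinset := by
      simp only [Set.Finite.mem_toFinset, SimpleGraph.mem_neighborSet]
      exact (hA v (Finset.mem_singleton_self v)).symm
    exact hwB this
  have h2 : Sum.inl '' (Γ.neighborSet v) ⊆ (GammaStar Γ g).neighborSet (Sum.inl v) := by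
    rintro _ ⟨u, hu, rfl⟩
    exact hu
  exact Set.Infinite.mono h2 (h1.image (Sum.inl_injective.injOn))

noncomputable def gs_nbr_equiv (p : Σ n : ℕ, Fin n) :
    Fin p.1 ≃ ((GammaStar Γ g).neighborSet (Sum.inr p)) := by
  classical
  refine Equiv.ofBijective
    (fun j => if h : j = p.2 then ⟨Sum.inl (g p.1), rfl⟩
      else ⟨Sum.inr ⟨p.1, j⟩, ⟨rfl, by
        intro hq
        exact h (by
          have h2 : (⟨p.1, j⟩ : Σ n : ℕ, Fin n) = ⟨p.1, p.2⟩ := by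
            rw [Sigma.eta]; exact hq.symm
          exact eq_of_heq (Sigma.mk.inj_iff.mp h2).2)⟩⟩) ?_
  constructor
  · intro j₁ j₂ hj
    by_cases h1 : j₁ = p.2 <;> by_cases h2 : j₂ = p.2
    · exact h1.trans h2.symm
    · simp [h1, h2] at hj
      exact (Sum.inl_ne_inr (congrArg Subtype.val hj)).elim
    · simp [h1, h2] at hj
      exact (Sum.inr_ne_inl (congrArg Subtype.val hj)).elim
    · simp only [h1, h2, dif_neg, not_false_iff] at hj
      have := Subtype.ext_iff.mp hj
      have h3 := Sum.inr_injective this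
      exact eq_of_heq (Sigma.mk.inj_iff.mp h3).2
  · rintro ⟨x, hx⟩
    rcases x with w | q
    · refine ⟨p.2, ?_⟩
      have : w = g p.1 := hx
      simp [this]
    · have h1 : q.1 = p.1 := hx.1.symm
      obtain ⟨m, j⟩ := q
      subst h1
      have hj : j ≠ p.2 := fun h => hx.2 (by cases h; rfl)
      refine ⟨j, ?_⟩
      simp [hj]

lemma gs_nbr_inr_finite (p : Σ n : ℕ, Fin n) :
    ((GammaStar Γ g).neighborSet (Sum.inr p)).Finite := by
  have := (gs_nbr_equiv Γ g p).symm
  exact Set.finite_coe_iff.mp (Finite.of_equiv _ (gs_nbr_equiv Γ g p))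

lemma gs_card_nbr_inr (p : Σ n : ℕ, Fin n) :
    Nat.card ((GammaStar Γ g).neighborSet (Sum.inr p)) = p.1 := by
  rw [← Nat.card_congr (gs_nbr_equiv Γ g p), Nat.card_eq_fintype_card, Fintype.card_fin]

end Aux

theorem gammaStar_aut_fixes_gamma {V : Type*} [Countable V]
    (Γ : SimpleGraph V) (hΓ : HasExtProp Γ) (g : ℕ → V) (hg : Function.Bijective g)
    (σ : GammaStar Γ g ≃g GammaStar Γ g) :
    ∀ v : V, σ (Sum.inl v) = Sum.inl v := by
  -- σ maps inl vertices to inl vertices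
  have hinl : ∀ v : V, ∃ w : V, σ (Sum.inl v) = Sum.inl w := by
    intro v
    cases h : σ (Sum.inl v) with
    | inl w => exact ⟨w, rfl⟩
    | inr q =>
      exfalso
      have hinf := gs_neighbor_inl_infinite Γ g hΓ v
      have e := σ.mapNeighborSet (Sum.inl v)
      rw [h] at e
      have hfin := gs_nbr_inr_finite Γ g q
      haveI : Finite ((GammaStar Γ g).neighborSet (Sum.inr q)) :=
        Set.finite_coe_iff.mpr hfin
      exact hinf (Set.finite_coe_iff.mp (Finite.of_equiv _ e.symm))
  -- σ maps inr vertices to inr vertices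
  have hinr : ∀ p : Σ n : ℕ, Fin n, ∃ q, σ (Sum.inr p) = Sum.inr q := by
    intro p
    cases h : σ (Sum.inr p) with
    | inl w =>
      exfalso
      have e := σ.mapNeighborSet (Sum.inr p)
      rw [h] at e
      have hfin := gs_nbr_inr_finite Γ g p
      have hinf := gs_neighbor_inl_infinite Γ g hΓ w
      haveI : Finite ((GammaStar Γ g).neighborSet (Sum.inr p)) := Set.finite_coe_iff.mpr hfin
      exact hinf (Set.finite_coe_iff.mp (Finite.of_equiv _ e))
    | inr q => exact ⟨q, rfl⟩
  -- σ fixes inl (g p.1) for sigma elements p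
  have hfix : ∀ p : Σ n : ℕ, Fin n, σ (Sum.inl (g p.1)) = Sum.inl (g p.1) := by
    intro p
    obtain ⟨q, hq⟩ := hinr p
    have hcard : q.1 = p.1 := by
      have e := σ.mapNeighborSet (Sum.inr p)
      rw [hq] at e
      have := Nat.card_congr e
      rw [gs_card_nbr_inr, gs_card_nbr_inr] at this
      exact this.symm
    obtain ⟨w, hw⟩ := hinl (g p.1)
    have hadj : (GammaStar Γ g).Adj (Sum.inl (g p.1)) (Sum.inr p) := rfl
    have hadj2 := σ.map_adj_iff.mpr hadj
    rw [hw, hq] at hadj2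
    have : w = g q.1 := hadj2
    rw [hw, this, hcard]
  intro v
  obtain ⟨w, hw⟩ := hinl v
  obtain ⟨m, hm⟩ := hg.2 w
  rcases Nat.eq_zero_or_pos m with hm0 | hmpos
  · -- w = g 0; need v = g 0 too
    obtain ⟨n, hn⟩ := hg.2 v
    rcases Nat.eq_zero_or_pos n with hn0 | hnpos
    · subst hn0; subst hm0
      rw [hw, ← hm, hn]
    · have := hfix ⟨n, ⟨0, hnpos⟩⟩
      simp only at this
      rw [hn] at this
      exact this
  · have := hfix ⟨m, ⟨0, hmpos⟩⟩
    simp only at this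
    rw [hm, ← hw] at this
    exact σ.injective this
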